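/- Let M be a Hermitian positive semidefinite n×n matrix. For any pairs (X₁, Z₁) and (X₂, Z₂) with Z₁, Z₂ Hermitian positive definite m×m matrices and X₁, X₂ ∈ ℂ^{m×n}, and t ∈ [0,1], the matrix-valued map h(Z, X) = M − M Xᴴ Z⁻¹ X M is matrix concave: h(tZ₁+(1-t)Z₂, tX₁+(1-t)X₂) ⪰ t·h(Z₁,X₁) + (1-t)·h(Z₂,X₂) in the Loewner order. -/

import Mathlib

open Matrix
open scoped ComplexOrder

private lemma psd_smul {k : Type*} [Fintype k] {A : Matrix k k ℂ} (hA : A.PosSemidef)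
    {t : ℝ} (ht : 0 ≤ t) : (t • A).PosSemidef := by
  refine ⟨?_, fun x => ?_⟩
  · unfold Matrix.IsHermitian
    rw [conjTranspose_smul, hA.1]
    simp
  · exact (hA.smul ht).2 x

private lemma pd_smul {k : Type*} [Fintype k] {A : Matrix k k ℂ} (hA : A.PosDef)
    {t : ℝ} (ht : 0 < t) : (t • A).PosDef := by
  refine ⟨?_, fun x hx => ?_⟩
  · unfold Matrix.IsHermitian
    rw [conjTranspose_smul, hA.1]
    simp
  · exact (hA.smul ht).2 hx

/-- For Hermitian PSD `M`, the map `h(Z, X) = M − M Xᴴ Z⁻¹ X M` is jointly matrix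
concave in `(Z, X)` with `Z` Hermitian positive definite, in the Loewner order. -/
theorem stmt_2 {m n : ℕ} (M : Matrix (Fin n) (Fin n) ℂ) (hM : M.PosSemidef)
    (X₁ X₂ : Matrix (Fin m) (Fin n) ℂ) (Z₁ Z₂ : Matrix (Fin m) (Fin m) ℂ)
    (hZ₁ : Z₁.PosDef) (hZ₂ : Z₂.PosDef) (t : ℝ) (ht0 : 0 ≤ t) (ht1 : t ≤ 1) :
    ((M - M * (t • X₁ + (1 - t) • X₂)ᴴ * (t • Z₁ + (1 - t) • Z₂)⁻¹ *
          (t • X₁ + (1 - t) • X₂) * M) -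
        (t • (M - M * X₁ᴴ * Z₁⁻¹ * X₁ * M) +
          (1 - t) • (M - M * X₂ᴴ * Z₂⁻¹ * X₂ * M))).PosSemidef := by
  have ht0' : (0:ℝ) ≤ 1 - t := by linarith
  set Y₁ := X₁ * M with hY₁
  set Y₂ := X₂ * M with hY₂
  set X := t • X₁ + (1 - t) • X₂ with hX
  set Z := t • Z₁ + (1 - t) • Z₂ with hZdef
  have hZ : Z.PosDef := by
    rcases eq_or_lt_of_le ht1 with h | h
    · rw [hZdef, h]; simpa using hZ₁
    · exact Matrix.PosDef.posSemidef_add (psd_smul hZ₁.posSemidef ht0)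
        (pd_smul hZ₂ (by linarith))
  haveI : Invertible Z₁ := hZ₁.isUnit.invertible
  haveI : Invertible Z₂ := hZ₂.isUnit.invertible
  haveI : Invertible Z := hZ.isUnit.invertible
  have h₁ : (fromBlocks Z₁ Y₁ Y₁ᴴ (Y₁ᴴ * Z₁⁻¹ * Y₁)).PosSemidef := by
    rw [PosDef.fromBlocks₁₁ _ _ hZ₁]
    simpa using Matrix.PosSemidef.zero
  have h₂ : (fromBlocks Z₂ Y₂ Y₂ᴴ (Y₂ᴴ * Z₂⁻¹ * Y₂)).PosSemidef := by
    rw [PosDef.fromBlocks₁₁ _ _ hZ₂]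
    simpa using Matrix.PosSemidef.zero
  have hsum := (psd_smul h₁ ht0).add (psd_smul h₂ ht0')
  have hY : X * M = t • Y₁ + (1 - t) • Y₂ := by
    rw [hX, hY₁, hY₂, Matrix.add_mul, Matrix.smul_mul, Matrix.smul_mul]
  have hblocks : t • fromBlocks Z₁ Y₁ Y₁ᴴ (Y₁ᴴ * Z₁⁻¹ * Y₁) +
      (1 - t) • fromBlocks Z₂ Y₂ Y₂ᴴ (Y₂ᴴ * Z₂⁻¹ * Y₂) =
      fromBlocks Z (X * M) (X * M)ᴴ
        (t • (Y₁ᴴ * Z₁⁻¹ * Y₁) + (1 - t) • (Y₂ᴴ * Z₂⁻¹ * Y₂)) := by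
    rw [fromBlocks_smul, fromBlocks_smul, fromBlocks_add, hY, conjTranspose_add,
      conjTranspose_smul, conjTranspose_smul]
    simp
    exact hZdef.symm
  rw [hblocks] at hsum
  rw [PosDef.fromBlocks₁₁ _ _ hZ] at hsum
  have key : ((M - M * Xᴴ * Z⁻¹ * X * M) -
      (t • (M - M * X₁ᴴ * Z₁⁻¹ * X₁ * M) +
        (1 - t) • (M - M * X₂ᴴ * Z₂⁻¹ * X₂ * M))) =
      (t • (Y₁ᴴ * Z₁⁻¹ * Y₁) + (1 - t) • (Y₂ᴴ * Z₂⁻¹ * Y₂)) - (X * M)ᴴ * Z⁻¹ * (X * M) := by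
    have hMh : Mᴴ = M := hM.1
    simp only [hY₁, hY₂, conjTranspose_mul, hMh, smul_sub, Matrix.mul_assoc]
    module
  rw [key]
  exact hsum
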